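/- Let F be a field, γ ∈ F, f ∈ F[X] a monic polynomial of degree d ≥ 1, and n ≥ r ≥ 1 integers. Define S(γ,f,n,r) ∈ M_{dn×dr}(F) by: the (i,j) entry is the coefficient of X^{i−1} in (X+γ)^{j−1} f(X)^{n−r}, for 1 ≤ i ≤ dn, 1 ≤ j ≤ dr. Then S(−γ,f,n,r)·(C_{f(X+γ)^r} + γI) = C_{f(X)^n}·S(−γ,f,n,r), where C_g denotes the companion matrix of a monic polynomial g. -/

import Mathlib

open Polynomial

/-- The companion matrix of a monic polynomial `g`, of size `n` (intended to be used with
`n = g.natDegree`): it has `1`'s on the subdiagonal, last column `(-g₀, …, -g_{n-1})ᵀ`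
and `0`'s elsewhere. -/
def companionOf {F : Type*} [Field F] (g : Polynomial F) (n : ℕ) :
    Matrix (Fin n) (Fin n) F :=
  fun i j => if (j : ℕ) = n - 1 then -g.coeff i else if (i : ℕ) = (j : ℕ) + 1 then 1 else 0

/-- The matrix `S(γ, f, n, r) ∈ M_{dn × dr}(F)`, whose `(i,j)` entry is the coefficient
of `X^(i-1)` in `(X + γ)^(j-1) · f(X)^(n-r)` (here rows and columns are indexed from `0`). -/
noncomputable def Smat {F : Type*} [Field F] (γ : F) (f : Polynomial F) (d n r : ℕ) :
    Matrix (Fin (d * n)) (Fin (d * r)) F :=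
  fun i j => ((X + C γ) ^ (j : ℕ) * f ^ (n - r)).coeff i

lemma aux_sum_C_coeff_mul_pow {F : Type*} [Field F] (p w : Polynomial F) (m : ℕ)
    (hp : p.Monic) (hm : p.natDegree = m) :
    ∑ k ∈ Finset.range m, C (p.coeff k) * w ^ k = p.comp w - w ^ m := by
  have h : p.comp w = ∑ k ∈ Finset.range (m + 1), C (p.coeff k) * w ^ k := by
    rw [comp_eq_sum_left, ← hm, p.sum_over_range (by simp)]
  rw [h, Finset.sum_range_succ, ← hm, hp.coeff_natDegree, map_one, one_mul, hm]
  ring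

lemma aux_companion_row_mul {F : Type*} [Field F] (g p : Polynomial F) {N : ℕ} (i : Fin N) :
    ∑ k : Fin N, companionOf g N i k * p.coeff k
      = (X * p).coeff i - g.coeff i * p.coeff (N - 1) := by
  obtain ⟨m, rfl⟩ : ∃ m, N = m + 1 := ⟨N - 1, (Nat.succ_pred_eq_of_pos i.pos).symm⟩
  have h1 : ∑ k : Fin (m+1), companionOf g (m+1) i k * p.coeff k
      = ∑ k ∈ Finset.range (m+1),
          (if k = m then -g.coeff i else if (i:ℕ) = k + 1 then (1:F) else 0) * p.coeff k := by
    rw [← Fin.sum_univ_eq_sum_range (fun k =>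
      (if k = m then -g.coeff i else if (i:ℕ) = k + 1 then (1:F) else 0) * p.coeff k)]
    simp [companionOf]
  rw [h1, Finset.sum_range_succ, if_pos rfl]
  have h2 : ∀ k ∈ Finset.range m,
      (if k = m then -g.coeff i else if (i:ℕ) = k + 1 then (1:F) else 0) * p.coeff k
      = (if (i:ℕ) = k + 1 then (1:F) else 0) * p.coeff k := by
    intro k hk
    rw [if_neg (Nat.ne_of_lt (Finset.mem_range.mp hk))]
  rw [Finset.sum_congr rfl h2]
  have h3 : ∑ k ∈ Finset.range m, (if (i:ℕ) = k + 1 then (1:F) else 0) * p.coeff k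
      = (X * p).coeff i := by
    rcases Nat.eq_zero_or_eq_succ_pred (i:ℕ) with h0 | hsucc
    · rw [h0]
      simp [mul_coeff_zero]
    · set t := (i:ℕ) - 1 with ht
      have hlt : t < m := by have := i.isLt; omega
      rw [hsucc, coeff_X_mul]
      have hiff : ∀ k, ((t + 1 = k + 1) ↔ (k = t)) := by omega
      calc ∑ k ∈ Finset.range m, (if t + 1 = k + 1 then (1:F) else 0) * p.coeff k
          = ∑ k ∈ Finset.range m, (if k = t then p.coeff k else 0) := by
            apply Finset.sum_congr rfl; intro k _
            by_cases hkt : k = t <;> simp [hkt, hiff, eq_comm (a := t) (b := k)]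
        _ = p.coeff t := by rw [Finset.sum_ite_eq']; simp [Finset.mem_range.mpr hlt]
  rw [h3, Nat.add_sub_cancel]
  ring

lemma aux_coeff_top {F : Type*} [Field F] (w q : Polynomial F)
    (hw : w.Monic) (hw1 : w.natDegree = 1) (hq : q.Monic) {N R : ℕ}
    (hR : 1 ≤ R) (hNR : (R - 1) + q.natDegree = N - 1) (j : ℕ) (hj : j < R) :
    (w ^ j * q).coeff (N - 1) = if j = R - 1 then 1 else 0 := by
  have hdeg : (w ^ j * q).natDegree = j + q.natDegree := by
    rw [(hw.pow j).natDegree_mul hq, natDegree_pow, hw1, mul_one]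
  by_cases hjr : j = R - 1
  · rw [if_pos hjr]
    have h : (w ^ j * q).natDegree = N - 1 := by rw [hdeg, hjr, hNR]
    rw [← h]
    exact ((hw.pow j).mul hq).coeff_natDegree
  · rw [if_neg hjr]
    apply coeff_eq_zero_of_natDegree_lt
    rw [hdeg]; omega

/-- Let `F` be a field, `γ ∈ F`, `f ∈ F[X]` monic of degree `d ≥ 1` and
`n ≥ r ≥ 1`.  Then `S(−γ,f,n,r) · (C_{f(X+γ)^r} + γ·I) = C_{f(X)^n} · S(−γ,f,n,r)`,
where `C_g` denotes the companion matrix of a monic polynomial `g`. -/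
theorem smat_companion_relation
    {F : Type*} [Field F] (γ : F) (f : Polynomial F) (d n r : ℕ)
    (hf : f.Monic) (hdeg : f.natDegree = d) (hd : 1 ≤ d) (hr : 1 ≤ r) (hnr : r ≤ n) :
    Smat (-γ) f d n r *
        (companionOf ((f.comp (X + C γ)) ^ r) (d * r) +
          γ • (1 : Matrix (Fin (d * r)) (Fin (d * r)) F)) =
      companionOf (f ^ n) (d * n) * Smat (-γ) f d n r := by
  set w : Polynomial F := X + C (-γ) with hwdef
  set q : Polynomial F := f ^ (n - r) with hqdef
  set g : Polynomial F := (f.comp (X + C γ)) ^ r with hgdef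
  have hw : w.Monic := monic_X_add_C _
  have hw1 : w.natDegree = 1 := natDegree_X_add_C _
  have hq : q.Monic := hf.pow _
  have hgm : g.Monic := (hf.comp_X_add_C γ).pow _
  have hgdeg : g.natDegree = d * r := by
    rw [hgdef, natDegree_pow, natDegree_comp, natDegree_X_add_C, hdeg]; ring
  have hcomp : g.comp w = f ^ r := by
    rw [hgdef, pow_comp, comp_assoc]
    have h : (X + C γ).comp w = X := by
      rw [hwdef]; simp [add_comp]
    rw [h, comp_X]
  have hfn : f ^ r * q = f ^ n := by
    rw [hqdef, ← pow_add, Nat.add_sub_cancel' hnr]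
  have hX : (X : Polynomial F) = w + C γ := by
    rw [hwdef, map_neg]; ring
  have hRN : 1 ≤ d * r ∧ (d * r - 1) + q.natDegree = d * n - 1 := by
    have hqd : q.natDegree = (n - r) * d := by
      rw [hqdef, natDegree_pow, hdeg, mul_comm]
    have h1 : (n - r) * d = n * d - r * d := Nat.sub_mul n r d
    have h2 : r * d ≤ n * d := Nat.mul_le_mul_right d hnr
    have h3 : 1 ≤ r * d := by
      calc 1 = 1 * 1 := by ring
        _ ≤ r * d := Nat.mul_le_mul hr hd
    constructor
    · rw [mul_comm]; exact h3
    · rw [hqd, h1, mul_comm d r, mul_comm d n]; omega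
  obtain ⟨hR1, hNR⟩ := hRN
  -- key coefficient identity for multiplication by X
  ext i j
  have hXmul : ∀ j' : ℕ, (X * (w ^ j' * q)).coeff i
      = (w ^ (j' + 1) * q).coeff i + γ * (w ^ j' * q).coeff i := by
    intro j'
    have h : X * (w ^ j' * q) = w ^ (j' + 1) * q + C γ * (w ^ j' * q) := by
      rw [hX, pow_succ]; ring
    rw [h, coeff_add, coeff_C_mul]
  rw [Matrix.mul_apply, Matrix.mul_apply]
  -- right hand side
  have hrhs : ∑ k : Fin (d * n), companionOf (f ^ n) (d * n) i k * Smat (-γ) f d n r k j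
      = (X * (w ^ (j:ℕ) * q)).coeff i
        - (f ^ n).coeff i * (if (j:ℕ) = d * r - 1 then 1 else 0) := by
    have h := aux_companion_row_mul (f ^ n) (w ^ (j:ℕ) * q) i
    rw [show (∑ k : Fin (d * n), companionOf (f ^ n) (d * n) i k * Smat (-γ) f d n r k j)
        = ∑ k : Fin (d * n), companionOf (f ^ n) (d * n) i k * (w ^ (j:ℕ) * q).coeff k from rfl,
      h, aux_coeff_top w q hw hw1 hq hR1 hNR (j:ℕ) j.isLt]
  rw [hrhs]
  -- left hand side: split off the γ • 1 part
  have hsmat : ∀ k : Fin (d * r), Smat (-γ) f d n r i k = (w ^ (k:ℕ) * q).coeff i := fun k => rfl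
  simp only [Matrix.add_apply, Matrix.smul_apply, Matrix.one_apply, smul_eq_mul, hsmat]
  have e1 : ∀ k : Fin (d * r), (w ^ (k:ℕ) * q).coeff i *
      (companionOf g (d * r) k j + γ * (if k = j then 1 else 0))
      = (w ^ (k:ℕ) * q).coeff i * companionOf g (d * r) k j
        + (if k = j then γ * (w ^ (k:ℕ) * q).coeff i else 0) := by
    intro k; by_cases hkj : k = j <;> simp [hkj] <;> ring
  rw [Finset.sum_congr rfl (fun k _ => e1 k), Finset.sum_add_distrib, Finset.sum_ite_eq']
  simp only [Finset.mem_univ, if_true]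
  by_cases hj : (j:ℕ) = d * r - 1
  · -- last column case
    have hcol : ∀ k : Fin (d * r), companionOf g (d * r) k j = -g.coeff k := by
      intro k; simp [companionOf, hj]
    rw [Finset.sum_congr rfl (fun k _ => by rw [hcol k])]
    have hsum : ∑ k : Fin (d * r), (w ^ (k:ℕ) * q).coeff i * (-g.coeff (k:ℕ))
        = (w ^ (d * r) * q).coeff i - (f ^ n).coeff i := by
      rw [Fin.sum_univ_eq_sum_range (fun k => (w ^ k * q).coeff i * (-g.coeff k))]
      have hs : ∑ k ∈ Finset.range (d * r), (w ^ k * q).coeff i * (-g.coeff k)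
          = -(((∑ k ∈ Finset.range (d * r), C (g.coeff k) * w ^ k) * q).coeff i) := by
        rw [Finset.sum_mul, finset_sum_coeff, ← Finset.sum_neg_distrib]
        apply Finset.sum_congr rfl; intro k _
        rw [mul_assoc, coeff_C_mul]; ring
      rw [hs, aux_sum_C_coeff_mul_pow g w (d * r) hgm hgdeg]
      have h2 : (g.comp w - w ^ (d * r)) * q = f ^ n - w ^ (d * r) * q := by
        rw [hcomp, sub_mul, hfn]
      rw [h2, coeff_sub]
      ring
    rw [hsum, if_pos hj, hXmul]
    have hjj : (j:ℕ) + 1 = d * r := by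
      rw [hj]; exact Nat.succ_pred_eq_of_pos hR1
    rw [hjj]
    ring
  · -- other columns
    have hj1 : (j:ℕ) + 1 < d * r :=
      Nat.add_lt_of_lt_sub (lt_of_le_of_ne (Nat.le_pred_of_lt j.isLt) hj)
    set k0 : Fin (d * r) := ⟨(j:ℕ) + 1, hj1⟩ with hk0
    have hcol : ∀ k : Fin (d * r), (w ^ (k:ℕ) * q).coeff i * companionOf g (d * r) k j
        = (if k = k0 then (w ^ (k:ℕ) * q).coeff i else 0) := by
      intro k
      by_cases hk : k = k0
      · rw [if_pos hk, hk]
        simp [companionOf, hj, hk0]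
      · rw [if_neg hk]
        have hkn : (k:ℕ) ≠ (j:ℕ) + 1 := by
          intro hc; exact hk (Fin.ext hc)
        simp [companionOf, hj, hkn]
    rw [Finset.sum_congr rfl (fun k _ => hcol k), Finset.sum_ite_eq']
    simp only [Finset.mem_univ, if_true]
    rw [if_neg hj, hXmul]
    ring
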